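/- The monitor DBA U(Gψ') for a G-free formula ψ' accepts an ω-word w from a state (ξ₁, ξ₂) if and only if w ⊨ Gψ' ∧ ξ₁ ∧ ξ₂. -/

import Mathlib

/-- LTL formulas in negation normal form over atomic propositions `AP`:
`φ ::= tt | ff | a | ¬a | φ∧φ | φ∨φ | Xφ | Fφ | Gφ | φUφ`. -/
inductive LTL (AP : Type) : Type
  | tt : LTL AP
  | ff : LTL AP
  | atom : AP → LTL AP
  | natom : AP → LTL AP
  | conj : LTL AP → LTL AP → LTL AP
  | disj : LTL AP → LTL AP → LTL AP
  | next : LTL AP → LTL AP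
  | ev : LTL AP → LTL AP
  | alw : LTL AP → LTL AP
  | untl : LTL AP → LTL AP → LTL AP

variable {AP : Type}

/-- The suffix of an ω-word: `wordDrop k w = w(k) w(k+1) ⋯`. -/
def wordDrop (k : ℕ) (w : ℕ → Set AP) : ℕ → Set AP := fun i => w (i + k)

/-- Standard LTL semantics over ω-words (letters are sets of atomic propositions). -/
def Sat : (ℕ → Set AP) → LTL AP → Prop
  | _, .tt => True
  | _, .ff => False
  | w, .atom a => a ∈ w 0
  | w, .natom a => a ∉ w 0
  | w, .conj φ ψ => Sat w φ ∧ Sat w ψ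
  | w, .disj φ ψ => Sat w φ ∨ Sat w ψ
  | w, .next φ => Sat (wordDrop 1 w) φ
  | w, .ev φ => ∃ k, Sat (wordDrop k w) φ
  | w, .alw φ => ∀ k, Sat (wordDrop k w) φ
  | w, .untl φ ψ => ∃ k, Sat (wordDrop k w) ψ ∧ ∀ j < k, Sat (wordDrop j w) φ

open Classical in
/-- The "after" function `af(φ, ν)` for a single letter `ν`. -/
noncomputable def af : LTL AP → Set AP → LTL AP
  | .tt, _ => .tt
  | .ff, _ => .ff
  | .atom a, ν => if a ∈ ν then .tt else .ff
  | .natom a, ν => if a ∈ ν then .ff else .tt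
  | .conj φ ψ, ν => .conj (af φ ν) (af ψ ν)
  | .disj φ ψ, ν => .disj (af φ ν) (af ψ ν)
  | .next φ, _ => φ
  | .ev φ, ν => .disj (af φ ν) (.ev φ)
  | .alw φ, ν => .conj (af φ ν) (.alw φ)
  | .untl φ ψ, ν => .disj (af ψ ν) (.conj (af φ ν) (.untl φ ψ))

/-- `af` extended to finite words: `af(φ, ε) = φ`, `af(φ, νv) = af(af(φ,ν), v)`. -/
noncomputable def afWord : LTL AP → List (Set AP) → LTL AP
  | φ, [] => φ
  | φ, ν :: v => afWord (af φ ν) v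

/-- Prepend a finite word `v` to an ω-word `w`. -/
def prependWord (v : List (Set AP)) (w : ℕ → Set AP) : ℕ → Set AP :=
  fun i => if h : i < v.length then v.get ⟨i, h⟩ else w (i - v.length)

/-- Propositional evaluation of a formula: proper formulas (non-`∧`/`∨`) are treated
as propositional atoms, evaluated by the assignment `v`. -/
def propEval (v : LTL AP → Prop) : LTL AP → Prop
  | .tt => True
  | .ff => False
  | .conj φ ψ => propEval v φ ∧ propEval v ψ
  | .disj φ ψ => propEval v φ ∨ propEval v ψ
  | φ => v φ

/-- Propositional equivalence `≡_P` of formulas. -/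
def PropEquiv (φ ψ : LTL AP) : Prop := ∀ v, propEval v φ ↔ propEval v ψ

open Classical in
/-- The transition function of the monitor DBA `U(Gψ')`:
`δ((ξ₁,ξ₂), ν) = (af(ξ₂,ν) ∧ ψ', tt)` if `af(ξ₁,ν) ≡_P tt`, and
`(af(ξ₁,ν), af(ξ₂,ν) ∧ ψ')` otherwise. -/
noncomputable def monStep (ψ' : LTL AP) (p : LTL AP × LTL AP) (ν : Set AP) :
    LTL AP × LTL AP :=
  if PropEquiv (af p.1 ν) .tt then (.conj (af p.2 ν) ψ', .tt)
  else (af p.1 ν, .conj (af p.2 ν) ψ')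

/-- The unique run of the monitor from state `p` on the ω-word `w`. -/
noncomputable def monRun (ψ' : LTL AP) (p : LTL AP × LTL AP) (w : ℕ → Set AP) :
    ℕ → LTL AP × LTL AP
  | 0 => p
  | n + 1 => monStep ψ' (monRun ψ' p w n) (w n)

/-- The monitor accepts `w` from state `p`: infinitely many accepting transitions
(those with `af(ξ₁,ν) ≡_P tt`) are taken on the unique run from `p`. -/
noncomputable def MonAcceptsFrom (ψ' : LTL AP) (p : LTL AP × LTL AP)
    (w : ℕ → Set AP) : Prop :=
  ∀ N, ∃ i, N ≤ i ∧ PropEquiv (af (monRun ψ' p w i).1 (w i)) .tt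

/-- The states of the monitor DBA: pairs reachable from the initial state
`(ψ', tt)`. -/
inductive MonReach (ψ' : LTL AP) : LTL AP × LTL AP → Prop
  | init : MonReach ψ' (ψ', .tt)
  | step {p : LTL AP × LTL AP} {ν : Set AP} :
      MonReach ψ' p → MonReach ψ' (monStep ψ' p ν)

/-- A formula is `G`-free if it contains no `G` operator. -/
def GFree : LTL AP → Prop
  | .alw _ => False
  | .conj φ ψ => GFree φ ∧ GFree ψ
  | .disj φ ψ => GFree φ ∧ GFree ψ
  | .next φ => GFree φ
  | .ev φ => GFree φ
  | .untl φ ψ => GFree φ ∧ GFree ψ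
  | _ => True

/-- The monitor DBA `U(Gψ')` for a `G`-free formula `ψ'` accepts an ω-word `w` from a
state `(ξ₁, ξ₂)` iff `w ⊨ Gψ' ∧ ξ₁ ∧ ξ₂`. -/
/- ## Auxiliary lemmas -/

lemma wordDrop_zero (w : ℕ → Set AP) : wordDrop 0 w = w := by
  funext i; simp [wordDrop]

lemma wordDrop_drop (a b : ℕ) (w : ℕ → Set AP) :
    wordDrop a (wordDrop b w) = wordDrop (a + b) w := by
  funext i; simp [wordDrop, Nat.add_assoc]

lemma wordDrop_one (k : ℕ) (w : ℕ → Set AP) :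
    wordDrop k (wordDrop 1 w) = wordDrop (k + 1) w := by
  rw [wordDrop_drop, Nat.add_comm]

lemma sat_af (φ : LTL AP) (w : ℕ → Set AP) :
    Sat w φ ↔ Sat (wordDrop 1 w) (af φ (w 0)) := by
  induction φ generalizing w with
  | tt => simp [Sat, af]
  | ff => simp [Sat, af]
  | atom a => by_cases h : a ∈ w 0 <;> simp [Sat, af, h]
  | natom a => by_cases h : a ∈ w 0 <;> simp [Sat, af, h]
  | conj φ ψ ihφ ihψ => simp only [Sat, af]; rw [ihφ, ihψ]
  | disj φ ψ ihφ ihψ => simp only [Sat, af]; rw [ihφ, ihψ]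
  | next φ _ => simp [Sat, af]
  | ev φ ih =>
    simp only [Sat, af]
    constructor
    · rintro ⟨k, hk⟩
      cases k with
      | zero => rw [wordDrop_zero] at hk; exact Or.inl ((ih w).mp hk)
      | succ k =>
        refine Or.inr ⟨k, ?_⟩
        rwa [wordDrop_one]
    · rintro (h | ⟨k, hk⟩)
      · exact ⟨0, by rwa [wordDrop_zero, ih w]⟩
      · exact ⟨k + 1, by rwa [wordDrop_one] at hk⟩
  | alw φ ih =>
    simp only [Sat, af]
    constructor
    · intro h
      refine ⟨(ih w).mp (by simpa [wordDrop_zero] using h 0), fun k => ?_⟩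
      rw [wordDrop_one]; exact h (k + 1)
    · rintro ⟨h0, h⟩ k
      cases k with
      | zero => rw [wordDrop_zero]; exact (ih w).mpr h0
      | succ k => rw [← wordDrop_one]; exact h k
  | untl φ ψ ihφ ihψ =>
    simp only [Sat, af]
    constructor
    · rintro ⟨k, hψ, hφ⟩
      cases k with
      | zero => rw [wordDrop_zero] at hψ; exact Or.inl ((ihψ w).mp hψ)
      | succ k =>
        refine Or.inr ⟨(ihφ w).mp (by simpa [wordDrop_zero] using hφ 0 (Nat.succ_pos k)),
          k, ?_, fun j hj => ?_⟩
        · rwa [wordDrop_one]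
        · rw [wordDrop_one]
          exact hφ (j + 1) (by omega)
    · rintro (h | ⟨h0, k, hψ, hφ⟩)
      · exact ⟨0, by rwa [wordDrop_zero, ihψ w], by omega⟩
      · refine ⟨k + 1, by rwa [wordDrop_one] at hψ, fun j hj => ?_⟩
        cases j with
        | zero => rw [wordDrop_zero]; exact (ihφ w).mpr h0
        | succ j =>
          rw [← wordDrop_one]
          exact hφ j (by omega)

lemma sat_af_at (φ : LTL AP) (w : ℕ → Set AP) (n : ℕ) :
    Sat (wordDrop n w) φ ↔ Sat (wordDrop (n + 1) w) (af φ (w n)) := by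
  have h := sat_af φ (wordDrop n w)
  rw [wordDrop_drop] at h
  simpa [wordDrop, Nat.add_comm] using h

lemma propEval_sat (w : ℕ → Set AP) (φ : LTL AP) :
    propEval (Sat w) φ ↔ Sat w φ := by
  induction φ with
  | tt => simp [propEval, Sat]
  | ff => simp [propEval, Sat]
  | conj φ ψ ihφ ihψ => simp [propEval, Sat, ihφ, ihψ]
  | disj φ ψ ihφ ihψ => simp [propEval, Sat, ihφ, ihψ]
  | _ => simp [propEval]

lemma sat_of_propEquiv_tt {φ : LTL AP} (h : PropEquiv φ .tt) (w : ℕ → Set AP) :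
    Sat w φ := by
  have := (h (Sat w)).mpr (by simp [propEval])
  rwa [propEval_sat] at this

lemma propEval_af (v : LTL AP → Prop) (φ : LTL AP) (ν : Set AP) :
    propEval v (af φ ν) ↔ propEval (fun α => propEval v (af α ν)) φ := by
  induction φ with
  | conj φ ψ ihφ ihψ => simp [af, propEval, ihφ, ihψ]
  | disj φ ψ ihφ ihψ => simp [af, propEval, ihφ, ihψ]
  | tt => simp [propEval, af]
  | ff => simp [propEval, af]
  | _ => simp [propEval]

lemma propEquiv_tt_af {φ : LTL AP} (h : PropEquiv φ .tt) (ν : Set AP) :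
    PropEquiv (af φ ν) .tt := by
  intro v
  rw [propEval_af]
  exact h _

lemma afWord_conj (φ ψ : LTL AP) (u : List (Set AP)) :
    afWord (.conj φ ψ) u = .conj (afWord φ u) (afWord ψ u) := by
  induction u generalizing φ ψ with
  | nil => rfl
  | cons ν u ih => simp [afWord, af, ih]

lemma afWord_disj (φ ψ : LTL AP) (u : List (Set AP)) :
    afWord (.disj φ ψ) u = .disj (afWord φ u) (afWord ψ u) := by
  induction u generalizing φ ψ with
  | nil => rfl
  | cons ν u ih => simp [afWord, af, ih]

lemma afWord_append (φ : LTL AP) (u v : List (Set AP)) :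
    afWord φ (u ++ v) = afWord (afWord φ u) v := by
  induction u generalizing φ with
  | nil => rfl
  | cons ν u ih => simp [afWord, ih]

lemma propEquiv_tt_afWord {φ : LTL AP} (h : PropEquiv φ .tt) (u : List (Set AP)) :
    PropEquiv (afWord φ u) .tt := by
  induction u generalizing φ with
  | nil => exact h
  | cons ν u ih => exact ih (propEquiv_tt_af h ν)

lemma propEquiv_tt_conj {α β : LTL AP} (hα : PropEquiv α .tt) (hβ : PropEquiv β .tt) :
    PropEquiv (.conj α β) .tt := by
  intro v
  simp only [propEval]
  exact ⟨fun _ => trivial, fun _ => ⟨(hα v).mpr trivial, (hβ v).mpr trivial⟩⟩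

lemma propEquiv_tt_disj_left {α : LTL AP} (β : LTL AP) (hα : PropEquiv α .tt) :
    PropEquiv (.disj α β) .tt := by
  intro v
  simp only [propEval]
  exact ⟨fun _ => trivial, fun _ => Or.inl ((hα v).mpr trivial)⟩

lemma propEquiv_tt_disj_right (α : LTL AP) {β : LTL AP} (hβ : PropEquiv β .tt) :
    PropEquiv (.disj α β) .tt := by
  intro v
  simp only [propEval]
  exact ⟨fun _ => trivial, fun _ => Or.inr ((hβ v).mpr trivial)⟩

/-- The prefix of length `n` of an ω-word. -/
noncomputable def pre (w : ℕ → Set AP) : ℕ → List (Set AP)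
  | 0 => []
  | n + 1 => w 0 :: pre (wordDrop 1 w) n

lemma pre_add (n m : ℕ) (w : ℕ → Set AP) :
    pre w (n + m) = pre w n ++ pre (wordDrop n w) m := by
  induction n generalizing w with
  | zero => simp [pre, wordDrop_zero]
  | succ n ih =>
    have : n + 1 + m = (n + m) + 1 := by omega
    rw [this]
    simp only [pre, ih (wordDrop 1 w), wordDrop_one, List.cons_append]

lemma afWord_tt_mono {φ : LTL AP} {w : ℕ → Set AP} {n : ℕ}
    (h : PropEquiv (afWord φ (pre w n)) .tt) {m : ℕ} (hnm : n ≤ m) :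
    PropEquiv (afWord φ (pre w m)) .tt := by
  obtain ⟨k, rfl⟩ := Nat.exists_eq_add_of_le hnm
  rw [pre_add, afWord_append]
  exact propEquiv_tt_afWord h _

lemma sat_afWord (n : ℕ) (φ : LTL AP) (w : ℕ → Set AP) :
    Sat w φ ↔ Sat (wordDrop n w) (afWord φ (pre w n)) := by
  induction n generalizing φ w with
  | zero => rw [wordDrop_zero]; rfl
  | succ n ih =>
    rw [sat_af φ w]
    rw [ih (af φ (w 0)) (wordDrop 1 w), wordDrop_one]
    rfl

/-- Key lemma: a satisfied `G`-free formula is eventually propositionally true under `af`. -/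
lemma gfree_sat_tt (φ : LTL AP) (hG : GFree φ) (w : ℕ → Set AP) (hs : Sat w φ) :
    ∃ n, PropEquiv (afWord φ (pre w n)) .tt := by
  induction φ generalizing w with
  | tt => exact ⟨0, fun v => Iff.rfl⟩
  | ff => exact absurd hs (by simp [Sat])
  | atom a =>
    refine ⟨1, ?_⟩
    have ha : a ∈ w 0 := hs
    simp [pre, afWord, af, ha]
    intro v; rfl
  | natom a =>
    refine ⟨1, ?_⟩
    have ha : a ∉ w 0 := hs
    simp [pre, afWord, af, ha]
    intro v; rfl
  | conj φ ψ ihφ ihψ =>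
    obtain ⟨n₁, h₁⟩ := ihφ hG.1 w hs.1
    obtain ⟨n₂, h₂⟩ := ihψ hG.2 w hs.2
    refine ⟨max n₁ n₂, ?_⟩
    rw [afWord_conj]
    exact propEquiv_tt_conj (afWord_tt_mono h₁ (Nat.le_max_left _ _))
      (afWord_tt_mono h₂ (Nat.le_max_right _ _))
  | disj φ ψ ihφ ihψ =>
    rcases hs with hs | hs
    · obtain ⟨n, h⟩ := ihφ hG.1 w hs
      exact ⟨n, by rw [afWord_disj]; exact propEquiv_tt_disj_left _ h⟩
    · obtain ⟨n, h⟩ := ihψ hG.2 w hs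
      exact ⟨n, by rw [afWord_disj]; exact propEquiv_tt_disj_right _ h⟩
  | next φ ih =>
    obtain ⟨n, h⟩ := ih hG (wordDrop 1 w) hs
    exact ⟨n + 1, h⟩
  | ev φ ih =>
    obtain ⟨k, hk⟩ := hs
    induction k generalizing w with
    | zero =>
      rw [wordDrop_zero] at hk
      obtain ⟨n, h⟩ := ih hG w hk
      refine ⟨n + 1, ?_⟩
      have h' : PropEquiv (afWord φ (pre w (n + 1))) .tt := afWord_tt_mono h (Nat.le_succ n)
      show PropEquiv (afWord (.disj (af φ (w 0)) (.ev φ)) (pre (wordDrop 1 w) n)) .tt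
      rw [afWord_disj]
      exact propEquiv_tt_disj_left _ h'
    | succ k ihk =>
      rw [← wordDrop_one] at hk
      obtain ⟨n, h⟩ := ihk (wordDrop 1 w) hk
      refine ⟨n + 1, ?_⟩
      show PropEquiv (afWord (.disj (af φ (w 0)) (.ev φ)) (pre (wordDrop 1 w) n)) .tt
      rw [afWord_disj]
      exact propEquiv_tt_disj_right _ h
  | alw φ ih => exact hG.elim
  | untl φ ψ ihφ ihψ =>
    obtain ⟨k, hk, hj⟩ := hs
    induction k generalizing w with
    | zero =>
      rw [wordDrop_zero] at hk
      obtain ⟨n, h⟩ := ihψ hG.2 w hk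
      refine ⟨n + 1, ?_⟩
      have h' : PropEquiv (afWord ψ (pre w (n + 1))) .tt := afWord_tt_mono h (Nat.le_succ n)
      show PropEquiv (afWord (.disj (af ψ (w 0)) (.conj (af φ (w 0)) (.untl φ ψ)))
        (pre (wordDrop 1 w) n)) .tt
      rw [afWord_disj]
      exact propEquiv_tt_disj_left _ h'
    | succ k ihk =>
      have h0 : Sat w φ := by
        have := hj 0 (Nat.succ_pos k); rwa [wordDrop_zero] at this
      obtain ⟨n₁, h₁⟩ := ihφ hG.1 w h0
      rw [← wordDrop_one] at hk
      obtain ⟨n₂, h₂⟩ := ihk (wordDrop 1 w) hk (fun j hjk => by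
        rw [wordDrop_one]; exact hj (j + 1) (by omega))
      refine ⟨max n₁ n₂ + 1, ?_⟩
      have hφ' : PropEquiv (afWord φ (pre w (max n₁ n₂ + 1))) .tt :=
        afWord_tt_mono h₁ (by omega)
      have hU' : PropEquiv (afWord (.untl φ ψ) (pre (wordDrop 1 w) (max n₁ n₂))) .tt :=
        afWord_tt_mono h₂ (Nat.le_max_right _ _)
      show PropEquiv (afWord (.disj (af ψ (w 0)) (.conj (af φ (w 0)) (.untl φ ψ)))
        (pre (wordDrop 1 w) (max n₁ n₂))) .tt
      rw [afWord_disj, afWord_conj]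
      exact propEquiv_tt_disj_right _ (propEquiv_tt_conj hφ' hU')

lemma pre_snoc (u : ℕ → Set AP) (m : ℕ) :
    pre u (m + 1) = pre u m ++ [u m] := by
  rw [pre_add m 1 u]
  congr 1
  simp [pre, wordDrop]

lemma gfree_af {φ : LTL AP} (hφ : GFree φ) (ν : Set AP) : GFree (af φ ν) := by
  induction φ with
  | tt => simp [af, GFree]
  | ff => simp [af, GFree]
  | atom a => by_cases h : a ∈ ν <;> simp [af, GFree, h]
  | natom a => by_cases h : a ∈ ν <;> simp [af, GFree, h]
  | conj φ ψ ihφ ihψ => exact ⟨ihφ hφ.1, ihψ hφ.2⟩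
  | disj φ ψ ihφ ihψ => exact ⟨ihφ hφ.1, ihψ hφ.2⟩
  | next φ _ => exact hφ
  | ev φ ih => exact ⟨ih hφ, hφ⟩
  | alw φ _ => exact hφ.elim
  | untl φ ψ ihφ ihψ => exact ⟨ihψ hφ.2, ihφ hφ.1, hφ⟩

lemma monReach_gfree {ψ' : LTL AP} {p : LTL AP × LTL AP} (h : MonReach ψ' p)
    (hψ : GFree ψ') : GFree p.1 ∧ GFree p.2 := by
  induction h with
  | init => exact ⟨hψ, by simp [GFree]⟩
  | @step p ν _ ih =>
    by_cases ha : PropEquiv (af p.1 ν) .tt <;> simp only [monStep, ha, if_true, if_false]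
    · exact ⟨⟨gfree_af ih.2 ν, hψ⟩, by simp [GFree]⟩
    · exact ⟨gfree_af ih.1 ν, gfree_af ih.2 ν, hψ⟩

lemma monReach_run {ψ' : LTL AP} {p : LTL AP × LTL AP} (h : MonReach ψ' p)
    (w : ℕ → Set AP) (n : ℕ) : MonReach ψ' (monRun ψ' p w n) := by
  induction n with
  | zero => exact h
  | succ n ih => exact ih.step

lemma monReach_sat_psi {ψ' : LTL AP} {p : LTL AP × LTL AP} (h : MonReach ψ' p)
    (w : ℕ → Set AP) (h1 : Sat w p.1) (h2 : Sat w p.2) : Sat w ψ' := by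
  induction h with
  | init => exact h1
  | @step p ν _ _ =>
    by_cases ha : PropEquiv (af p.1 ν) .tt <;>
      simp only [monStep, ha, if_true, if_false] at h1 h2
    · exact h1.2
    · exact h2.2

section Run

variable {ψ' : LTL AP} {p : LTL AP × LTL AP} {w : ℕ → Set AP}

lemma run_fst_nonacc {n : ℕ} (h : ¬ PropEquiv (af (monRun ψ' p w n).1 (w n)) .tt) :
    (monRun ψ' p w (n + 1)).1 = af (monRun ψ' p w n).1 (w n) := by
  simp [monRun, monStep, h]

lemma run_fst_acc {n : ℕ} (h : PropEquiv (af (monRun ψ' p w n).1 (w n)) .tt) :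
    (monRun ψ' p w (n + 1)).1 = .conj (af (monRun ψ' p w n).2 (w n)) ψ' := by
  simp [monRun, monStep, h]

lemma run_snd_nonacc {n : ℕ} (h : ¬ PropEquiv (af (monRun ψ' p w n).1 (w n)) .tt) :
    (monRun ψ' p w (n + 1)).2 = .conj (af (monRun ψ' p w n).2 (w n)) ψ' := by
  simp [monRun, monStep, h]

/-- Backward propagation of satisfaction of the first component from an accepting
transition. -/
lemma back1 {i : ℕ} (hi : PropEquiv (af (monRun ψ' p w i).1 (w i)) .tt) :
    ∀ j ≤ i, Sat (wordDrop j w) (monRun ψ' p w j).1 := by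
  have key : ∀ d j, j + d = i → Sat (wordDrop j w) (monRun ψ' p w j).1 := by
    intro d
    induction d with
    | zero =>
      intro j hj
      obtain rfl : j = i := by omega
      exact (sat_af_at _ w j).mpr (sat_of_propEquiv_tt hi _)
    | succ d ihd =>
      intro j hj
      by_cases ha : PropEquiv (af (monRun ψ' p w j).1 (w j)) .tt
      · exact (sat_af_at _ w j).mpr (sat_of_propEquiv_tt ha _)
      · have h1 := ihd (j + 1) (by omega)
        rw [run_fst_nonacc ha] at h1
        exact (sat_af_at _ w j).mpr h1
  intro j hj
  exact key (i - j) j (by omega)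

/-- Backward propagation of satisfaction of the second component, given two
accepting transitions. -/
lemma back2 {i i' : ℕ} (hi : PropEquiv (af (monRun ψ' p w i).1 (w i)) .tt)
    (hi' : PropEquiv (af (monRun ψ' p w i').1 (w i')) .tt) (hii' : i < i') :
    ∀ j ≤ i, Sat (wordDrop j w) (monRun ψ' p w j).2 := by
  have key : ∀ d j, j + d = i → Sat (wordDrop j w) (monRun ψ' p w j).2 := by
    intro d
    induction d with
    | zero =>
      intro j hj
      obtain rfl : j = i := by omega
      have h1 := back1 hi' (j + 1) (by omega)
      rw [run_fst_acc hi] at h1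
      exact (sat_af_at _ w j).mpr h1.1
    | succ d ihd =>
      intro j hj
      by_cases ha : PropEquiv (af (monRun ψ' p w j).1 (w j)) .tt
      · have h1 := back1 hi' (j + 1) (by omega)
        rw [run_fst_acc ha] at h1
        exact (sat_af_at _ w j).mpr h1.1
      · have h1 := ihd (j + 1) (by omega)
        rw [run_snd_nonacc ha] at h1
        exact (sat_af_at _ w j).mpr h1.1
  intro j hj
  exact key (i - j) j (by omega)

/-- Forward invariant: if `w` satisfies `Gψ'` and both components of `p`, then every
suffix satisfies the corresponding components of the run. -/
lemma run_inv (hψ : ∀ k, Sat (wordDrop k w) ψ') (h1 : Sat w p.1) (h2 : Sat w p.2) :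
    ∀ n, Sat (wordDrop n w) (monRun ψ' p w n).1 ∧
      Sat (wordDrop n w) (monRun ψ' p w n).2 := by
  intro n
  induction n with
  | zero => rw [wordDrop_zero]; exact ⟨h1, h2⟩
  | succ n ih =>
    have e1 := (sat_af_at (monRun ψ' p w n).1 w n).mp ih.1
    have e2 := (sat_af_at (monRun ψ' p w n).2 w n).mp ih.2
    by_cases ha : PropEquiv (af (monRun ψ' p w n).1 (w n)) .tt <;>
      simp only [monRun, monStep, ha, if_true, if_false]
    · exact ⟨⟨e2, hψ (n + 1)⟩, trivial⟩
    · exact ⟨e1, e2, hψ (n + 1)⟩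

/-- As long as no accepting transition is taken, the first component is the `afWord`
of its initial value. -/
lemma run_fst_eq {N : ℕ} {n : ℕ}
    (hnon : ∀ j < n, ¬ PropEquiv (af (monRun ψ' p w (N + j)).1 (w (N + j))) .tt) :
    ∀ m ≤ n, (monRun ψ' p w (N + m)).1 = afWord (monRun ψ' p w N).1 (pre (wordDrop N w) m) := by
  intro m
  induction m with
  | zero => intro _; rfl
  | succ m ihm =>
    intro hm
    rw [show N + (m + 1) = (N + m) + 1 by omega,
      run_fst_nonacc (hnon m (by omega)), ihm (by omega), pre_snoc, afWord_append]
    have : (wordDrop N w) m = w (N + m) := by simp [wordDrop, Nat.add_comm]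
    rw [this]
    rfl

end Run
theorem stmt_15 {AP : Type} (ψ' ξ₁ ξ₂ : LTL AP) (hG : GFree ψ')
    (hreach : MonReach ψ' (ξ₁, ξ₂)) (w : ℕ → Set AP) :
    MonAcceptsFrom ψ' (ξ₁, ξ₂) w ↔
      Sat w (.conj (.alw ψ') (.conj ξ₁ ξ₂)) := by
  constructor
  · intro hacc
    have main : ∀ n, Sat (wordDrop n w) (monRun ψ' (ξ₁, ξ₂) w n).1 ∧
        Sat (wordDrop n w) (monRun ψ' (ξ₁, ξ₂) w n).2 := by
      intro n
      obtain ⟨i, hni, hi⟩ := hacc n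
      obtain ⟨i', hii', hi'⟩ := hacc (i + 1)
      exact ⟨back1 hi' n (by omega), back2 hi hi' (by omega) n hni⟩
    refine ⟨fun k => monReach_sat_psi (monReach_run hreach w k) _ (main k).1 (main k).2,
      ?_, ?_⟩
    · have := (main 0).1; rwa [wordDrop_zero] at this
    · have := (main 0).2; rwa [wordDrop_zero] at this
  · rintro ⟨hψ, h1, h2⟩ N
    have hψ' : ∀ k, Sat (wordDrop k w) ψ' := hψ
    have hinv := run_inv (p := (ξ₁, ξ₂)) hψ' h1 h2
    have hgf : GFree (monRun ψ' (ξ₁, ξ₂) w N).1 :=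
      (monReach_gfree (monReach_run hreach w N) hG).1
    obtain ⟨n, htt⟩ := gfree_sat_tt _ hgf (wordDrop N w) (hinv N).1
    by_cases hex : ∃ j, j < n ∧
        PropEquiv (af (monRun ψ' (ξ₁, ξ₂) w (N + j)).1 (w (N + j))) .tt
    · obtain ⟨j, _, h⟩ := hex
      exact ⟨N + j, by omega, h⟩
    · push_neg at hex
      have heq := run_fst_eq (fun j hj => hex j hj) n le_rfl
      refine ⟨N + n, by omega, ?_⟩
      rw [heq]
      exact propEquiv_tt_af htt _
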